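/- arXiv:1608.05857 — 2 statements merged into one kernel-verified Lean document; each statement's English description precedes it below -/
import Mathlib

section
/- Let 𝒩 be a nest on a separable complex Hilbert space H and let a ∈ Alg 𝒩. Assume that for every Q ∈ 𝒩 with Q ≠ {0} and Q_- = Q one has inf{‖Q P^⊥ a Q P^⊥‖ : P ∈ 𝒩, P < Q} = 0, and that for every Q ∈ 𝒩 with Q ≠ H and Q_+ = Q one has inf{‖Q^⊥ P a Q^⊥ P‖ : P ∈ 𝒩, P > Q} = 0. Then for every ε > 0 the set {Q ∈ 𝒩 : ‖Q Q_-^⊥ a Q Q_-^⊥‖ > ε} is finite. -/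
open scoped InnerProductSpace

set_option synthInstance.maxHeartbeats 1000000
set_option maxHeartbeats 1000000

/-- A nest on a complex Hilbert space `H`: a family of closed subspaces, totally ordered by
inclusion, containing `{0}` and `H`, closed under intersections and closed linear spans. -/
structure Nest (H : Type*) [NormedAddCommGroup H] [InnerProductSpace ℂ H]
    [CompleteSpace H] where
  carrier : Set (Submodule ℂ H)
  isClosed : ∀ N ∈ carrier, IsClosed (N : Set H)
  total : ∀ N ∈ carrier, ∀ M ∈ carrier, N ≤ M ∨ M ≤ N
  bot_mem : ⊥ ∈ carrier
  top_mem : ⊤ ∈ carrier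
  sInf_mem : ∀ S ⊆ carrier, S.Nonempty → sInf S ∈ carrier
  closedSpan_mem : ∀ S ⊆ carrier, S.Nonempty → (sSup S).topologicalClosure ∈ carrier

variable {H : Type*} [NormedAddCommGroup H] [InnerProductSpace ℂ H] [CompleteSpace H]

/-- The orthogonal projection onto a closed subspace, as an operator `H →L[ℂ] H`. -/
noncomputable def subProj (N : Submodule ℂ H) (hN : IsClosed (N : Set H)) : H →L[ℂ] H :=
  haveI : CompleteSpace N := hN.completeSpace_coe
  N.subtypeL ∘L N.orthogonalProjection

/-- The orthogonal projection onto an element of a nest. -/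
noncomputable def Nest.proj (𝒩 : Nest H) (N : Submodule ℂ H) (hN : N ∈ 𝒩.carrier) :
    H →L[ℂ] H :=
  subProj N (𝒩.isClosed N hN)

/-- The nest algebra of all bounded operators leaving every element of the nest invariant. -/
def nestAlgebra (𝒩 : Nest H) : Subalgebra ℂ (H →L[ℂ] H) where
  carrier := {T | ∀ N ∈ 𝒩.carrier, ∀ x ∈ N, T x ∈ N}
  mul_mem' := fun hT hS N hN x hx => hT N hN _ (hS N hN x hx)
  one_mem' := fun N _ x hx => hx
  add_mem' := fun hT hS N hN x hx => N.add_mem (hT N hN x hx) (hS N hN x hx)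
  algebraMap_mem' := fun r N _ x hx => by
    simpa [Algebra.algebraMap_eq_smul_one] using N.smul_mem r hx

/-- `Q₋`: the closed span of the elements of the nest strictly below `Q`. -/
def Nest.pred (𝒩 : Nest H) (Q : Submodule ℂ H) : Submodule ℂ H :=
  (sSup {P | P ∈ 𝒩.carrier ∧ P < Q}).topologicalClosure

/-- `Q₊`: the intersection of the elements of the nest strictly above `Q`. -/
def Nest.succ (𝒩 : Nest H) (Q : Submodule ℂ H) : Submodule ℂ H :=
  sInf {P | P ∈ 𝒩.carrier ∧ Q < P}

/-- The projection onto `Q₋`. -/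
noncomputable def Nest.predProj (𝒩 : Nest H) (Q : Submodule ℂ H) : H →L[ℂ] H :=
  subProj (𝒩.pred Q) (Submodule.isClosed_topologicalClosure _)

/-- The rank one operator `e ⊗ f : h ↦ ⟨h, e⟩ f` (inner product linear in `h`). -/
noncomputable def rankOne (e f : H) : H →L[ℂ] H :=
  (ContinuousLinearMap.toSpanSingleton ℂ f).comp (innerSL ℂ e)

/-- The Jacobson radical of the nest algebra, viewed as a set of operators on `H`. -/
def nestRadical (𝒩 : Nest H) : Set (H →L[ℂ] H) :=
  (fun a : nestAlgebra 𝒩 => (a : H →L[ℂ] H)) ''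
    {a | a ∈ (⊥ : TwoSidedIdeal (nestAlgebra 𝒩)).jacobson}

/-- `K(𝒩)`: the compact operators belonging to the nest algebra. -/
def nestCompacts (𝒩 : Nest H) : Set (H →L[ℂ] H) :=
  {T | T ∈ nestAlgebra 𝒩 ∧ IsCompactOperator T}

/-- `K(𝒩) + Rad(Alg 𝒩)` as a set of operators. -/
def nestKplusRad (𝒩 : Nest H) : Set (H →L[ℂ] H) :=
  {T | ∃ k ∈ nestCompacts 𝒩, ∃ r ∈ nestRadical 𝒩, T = k + r}

/-- The projection `Q Q₋^⊥` onto the atom determined by `Q`. -/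
noncomputable def Nest.atomProj (𝒩 : Nest H) (Q : Submodule ℂ H) (hQ : Q ∈ 𝒩.carrier) :
    H →L[ℂ] H :=
  𝒩.proj Q hQ * (1 - 𝒩.predProj Q)


section AuxProofs

lemma subProj_apply_mem (N : Submodule ℂ H) (hN : IsClosed (N : Set H)) (x : H) :
    subProj N hN x ∈ N := by
  haveI : CompleteSpace N := hN.completeSpace_coe
  exact (N.orthogonalProjection x).2

lemma subProj_apply_of_mem {N : Submodule ℂ H} (hN : IsClosed (N : Set H)) {x : H}
    (hx : x ∈ N) : subProj N hN x = x := by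
  haveI : CompleteSpace N := hN.completeSpace_coe
  exact congrArg Subtype.val (Submodule.orthogonalProjectionOnto_mem_subspace_eq_self (K := N) ⟨x, hx⟩)

lemma subProj_mul_of_le {M N : Submodule ℂ H} (hM : IsClosed (M : Set H))
    (hN : IsClosed (N : Set H)) (h : M ≤ N) :
    subProj M hM * subProj N hN = subProj M hM := by
  haveI : CompleteSpace M := hM.completeSpace_coe
  haveI : CompleteSpace N := hN.completeSpace_coe
  ext x
  exact congrArg Subtype.val (Submodule.orthogonalProjectionOnto_starProjection_of_le h x)

lemma subProj_mul_of_le' {M N : Submodule ℂ H} (hM : IsClosed (M : Set H))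
    (hN : IsClosed (N : Set H)) (h : M ≤ N) :
    subProj N hN * subProj M hM = subProj M hM := by
  ext x
  exact subProj_apply_of_mem hN (h (subProj_apply_mem M hM x))

lemma norm_subProj_le (N : Submodule ℂ H) (hN : IsClosed (N : Set H)) :
    ‖subProj N hN‖ ≤ 1 := by
  haveI : CompleteSpace N := hN.completeSpace_coe
  refine ContinuousLinearMap.opNorm_le_bound _ zero_le_one fun x => ?_
  rw [one_mul]
  calc ‖subProj N hN x‖ = ‖N.orthogonalProjection x‖ := rfl
    _ ≤ ‖N.orthogonalProjection‖ * ‖x‖ := (N.orthogonalProjection).le_opNorm x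
    _ ≤ 1 * ‖x‖ := by gcongr; exact Submodule.orthogonalProjectionOnto_norm_le (K := N)
    _ = ‖x‖ := one_mul _

lemma one_sub_subProj {N : Submodule ℂ H} (hN : IsClosed (N : Set H)) :
    (1 : H →L[ℂ] H) - subProj N hN = subProj Nᗮ N.isClosed_orthogonal := by
  haveI : CompleteSpace N := hN.completeSpace_coe
  ext x
  have h := Submodule.starProjection_add_starProjection_orthogonal (K := N) x
  have hx : x - (subProj N hN x) = subProj Nᗮ N.isClosed_orthogonal x :=
    sub_eq_of_eq_add' h.symm
  simpa using hx

lemma norm_one_sub_subProj {N : Submodule ℂ H} (hN : IsClosed (N : Set H)) :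
    ‖(1 : H →L[ℂ] H) - subProj N hN‖ ≤ 1 := by
  rw [one_sub_subProj hN]; exact norm_subProj_le _ _

lemma sandwich_left {X R Qn Y : Submodule ℂ H}
    (hX : IsClosed (X : Set H)) (hR : IsClosed (R : Set H))
    (hQn : IsClosed (Qn : Set H)) (hY : IsClosed (Y : Set H))
    (hXR : X ≤ R) (hRQn : R ≤ Qn) (hQnY : Qn ≤ Y) :
    (subProj Qn hQn - subProj R hR) * (subProj Y hY - subProj X hX) =
      subProj Qn hQn - subProj R hR := by
  have h1 : subProj Qn hQn * subProj Y hY = subProj Qn hQn := subProj_mul_of_le _ _ hQnY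
  have h2 : subProj Qn hQn * subProj X hX = subProj X hX :=
    subProj_mul_of_le' _ _ (hXR.trans hRQn)
  have h3 : subProj R hR * subProj Y hY = subProj R hR :=
    subProj_mul_of_le _ _ (hRQn.trans hQnY)
  have h4 : subProj R hR * subProj X hX = subProj X hX := subProj_mul_of_le' _ _ hXR
  rw [sub_mul, mul_sub, mul_sub, h1, h2, h3, h4]
  abel

lemma sandwich_right {X R Qn Y : Submodule ℂ H}
    (hX : IsClosed (X : Set H)) (hR : IsClosed (R : Set H))
    (hQn : IsClosed (Qn : Set H)) (hY : IsClosed (Y : Set H))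
    (hXR : X ≤ R) (hRQn : R ≤ Qn) (hQnY : Qn ≤ Y) :
    (subProj Y hY - subProj X hX) * (subProj Qn hQn - subProj R hR) =
      subProj Qn hQn - subProj R hR := by
  have h1 : subProj Y hY * subProj Qn hQn = subProj Qn hQn := subProj_mul_of_le' _ _ hQnY
  have h2 : subProj Y hY * subProj R hR = subProj R hR :=
    subProj_mul_of_le' _ _ (hRQn.trans hQnY)
  have h3 : subProj X hX * subProj Qn hQn = subProj X hX :=
    subProj_mul_of_le _ _ (hXR.trans hRQn)
  have h4 : subProj X hX * subProj R hR = subProj X hX := subProj_mul_of_le _ _ hXR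
  rw [sub_mul, mul_sub, mul_sub, h1, h2, h3, h4]
  abel

lemma key_norm_le {A B a : H →L[ℂ] H} (hAB : A * B = A) (hBA : B * A = A)
    (hA : ‖A‖ ≤ 1) : ‖A * a * A‖ ≤ ‖B * a * B‖ := by
  have hrw : A * a * A = A * (B * a * B) * A := by
    have h : A * (B * a * B) * A = (A * B) * a * (B * A) := by noncomm_ring
    rw [h, hAB, hBA]
  rw [hrw]
  have h1 : ‖A * (B * a * B) * A‖ ≤ ‖A‖ * ‖B * a * B‖ * ‖A‖ :=
    le_trans (norm_mul_le _ _) (by gcongr; exact norm_mul_le _ _)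
  have h2 : ‖A‖ * ‖B * a * B‖ * ‖A‖ ≤ 1 * ‖B * a * B‖ * 1 := by gcongr <;> positivity
  calc ‖A * (B * a * B) * A‖ ≤ ‖A‖ * ‖B * a * B‖ * ‖A‖ := h1
    _ ≤ 1 * ‖B * a * B‖ * 1 := h2
    _ = ‖B * a * B‖ := by ring

lemma Nest.pred_le (𝒩 : Nest H) {Q : Submodule ℂ H} (hQ : Q ∈ 𝒩.carrier) :
    𝒩.pred Q ≤ Q :=
  Submodule.topologicalClosure_minimal _ (sSup_le fun _ hP => hP.2.le) (𝒩.isClosed Q hQ)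

lemma Nest.atomProj_eq (𝒩 : Nest H) (Q : Submodule ℂ H) (hQ : Q ∈ 𝒩.carrier) :
    𝒩.atomProj Q hQ = subProj Q (𝒩.isClosed Q hQ) -
      subProj (𝒩.pred Q) (Submodule.isClosed_topologicalClosure _) := by
  show subProj Q (𝒩.isClosed Q hQ) *
      (1 - subProj (𝒩.pred Q) (Submodule.isClosed_topologicalClosure _)) = _
  rw [mul_sub, mul_one,
    subProj_mul_of_le' (M := 𝒩.pred Q) (Submodule.isClosed_topologicalClosure _)
      (𝒩.isClosed Q hQ) (𝒩.pred_le hQ)]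

lemma Nest.norm_atomProj_le (𝒩 : Nest H) (Q : Submodule ℂ H) (hQ : Q ∈ 𝒩.carrier) :
    ‖𝒩.atomProj Q hQ‖ ≤ 1 := by
  have h1 : ‖𝒩.proj Q hQ‖ ≤ 1 := norm_subProj_le _ _
  have h2 : ‖(1 : H →L[ℂ] H) - 𝒩.predProj Q‖ ≤ 1 :=
    norm_one_sub_subProj (N := 𝒩.pred Q) (Submodule.isClosed_topologicalClosure _)
  have h3 : ‖𝒩.atomProj Q hQ‖ ≤ ‖𝒩.proj Q hQ‖ * ‖(1 : H →L[ℂ] H) - 𝒩.predProj Q‖ :=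
    norm_mul_le _ _
  nlinarith [norm_nonneg (𝒩.proj Q hQ), norm_nonneg ((1 : H →L[ℂ] H) - 𝒩.predProj Q)]

end AuxProofs

/-- If the Ringrose criteria hold at every limit point of the nest, then for every `ε > 0`
only finitely many atoms `Q Q₋^⊥` satisfy `‖Q Q₋^⊥ a Q Q₋^⊥‖ > ε`. -/
theorem nest_atoms_finite [TopologicalSpace.SeparableSpace H] (𝒩 : Nest H)
    (a : H →L[ℂ] H) (ha : a ∈ nestAlgebra 𝒩)
    (h₁ : ∀ Q, ∀ hQ : Q ∈ 𝒩.carrier, Q ≠ ⊥ → 𝒩.pred Q = Q →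
      sInf {r : ℝ | ∃ P, ∃ hP : P ∈ 𝒩.carrier, P < Q ∧
          r = ‖(𝒩.proj Q hQ * (1 - 𝒩.proj P hP)) * a *
              (𝒩.proj Q hQ * (1 - 𝒩.proj P hP))‖} = 0)
    (h₂ : ∀ Q, ∀ hQ : Q ∈ 𝒩.carrier, Q ≠ ⊤ → 𝒩.succ Q = Q →
      sInf {r : ℝ | ∃ P, ∃ hP : P ∈ 𝒩.carrier, Q < P ∧
          r = ‖((1 - 𝒩.proj Q hQ) * 𝒩.proj P hP) * a *
              ((1 - 𝒩.proj Q hQ) * 𝒩.proj P hP)‖} = 0)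
    (ε : ℝ) (hε : 0 < ε) :
    {Q : Submodule ℂ H | ∃ hQ : Q ∈ 𝒩.carrier,
      ε < ‖𝒩.atomProj Q hQ * a * 𝒩.atomProj Q hQ‖}.Finite  := by
  by_contra hfin
  have hinf : {Q : Submodule ℂ H | ∃ hQ : Q ∈ 𝒩.carrier,
      ε < ‖𝒩.atomProj Q hQ * a * 𝒩.atomProj Q hQ‖}.Infinite := hfin
  set e := hinf.natEmbedding with he
  set F : ℕ → Submodule ℂ H := fun n => (e n : Submodule ℂ H) with hFdef
  have hFS : ∀ n, ∃ hQ : F n ∈ 𝒩.carrier,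
      ε < ‖𝒩.atomProj (F n) hQ * a * 𝒩.atomProj (F n) hQ‖ := fun n => (e n).2
  have hFmem : ∀ n, F n ∈ 𝒩.carrier := fun n => (hFS n).choose
  have hFinj : Function.Injective F := fun m n h => e.injective (Subtype.ext h)
  haveI : IsTrans (Submodule ℂ H) (· ≤ ·) := ⟨fun _ _ _ => le_trans⟩
  obtain ⟨g, hg | hg⟩ := exists_increasing_or_nonincreasing_subseq
    (· ≤ · : Submodule ℂ H → Submodule ℂ H → Prop) F
  · -- increasing case
    set Qn : ℕ → Submodule ℂ H := fun n => F (g n) with hQndef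
    have hQnmem : ∀ n, Qn n ∈ 𝒩.carrier := fun n => hFmem (g n)
    have hQnlt : ∀ m n, m < n → Qn m < Qn n := fun m n h =>
      (hg m n h).lt_of_ne fun hEq => h.ne (g.injective (hFinj hEq))
    set Q : Submodule ℂ H := (sSup (Set.range Qn)).topologicalClosure with hQdef
    have hQmem : Q ∈ 𝒩.carrier := 𝒩.closedSpan_mem (Set.range Qn)
      (by rintro _ ⟨n, rfl⟩; exact hQnmem n) ⟨Qn 0, 0, rfl⟩
    have hQclosed : IsClosed (Q : Set H) := 𝒩.isClosed Q hQmem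
    have hQnleQ : ∀ n, Qn n ≤ Q := fun n =>
      (le_sSup (s := Set.range Qn) ⟨n, rfl⟩).trans (Submodule.le_topologicalClosure _)
    have hQnltQ : ∀ n, Qn n < Q := fun n =>
      lt_of_lt_of_le (hQnlt n (n + 1) (by omega)) (hQnleQ (n + 1))
    have hQne : Q ≠ ⊥ := (bot_le.trans_lt (hQnltQ 0)).ne'
    have hpred : 𝒩.pred Q = Q := by
      refine le_antisymm (𝒩.pred_le hQmem) ?_
      exact Submodule.topologicalClosure_mono
        (sSup_le_sSup (by rintro _ ⟨n, rfl⟩; exact ⟨hQnmem n, hQnltQ n⟩))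
    have h0 := h₁ Q hQmem hQne hpred
    have hlt : sInf {r : ℝ | ∃ P, ∃ hP : P ∈ 𝒩.carrier, P < Q ∧
        r = ‖(𝒩.proj Q hQmem * (1 - 𝒩.proj P hP)) * a *
            (𝒩.proj Q hQmem * (1 - 𝒩.proj P hP))‖} < ε :=
      lt_of_le_of_lt (le_of_eq h0) hε
    have hnone : {r : ℝ | ∃ P, ∃ hP : P ∈ 𝒩.carrier, P < Q ∧
        r = ‖(𝒩.proj Q hQmem * (1 - 𝒩.proj P hP)) * a *
            (𝒩.proj Q hQmem * (1 - 𝒩.proj P hP))‖}.Nonempty :=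
      ⟨_, Qn 0, hQnmem 0, hQnltQ 0, rfl⟩
    obtain ⟨r, hrmem, hrlt⟩ := exists_lt_of_csInf_lt hnone hlt
    obtain ⟨P, hP, hPQ, rfl⟩ := hrmem
    obtain ⟨n, hPn⟩ : ∃ n, P < Qn n := by
      by_contra hc
      push_neg at hc
      have hle : ∀ n, Qn n ≤ P := fun n => by
        rcases 𝒩.total (Qn n) (hQnmem n) P hP with h | h
        · exact h
        · rcases h.lt_or_eq with h' | h'
          · exact absurd h' (hc n)
          · exact h'.ge
      exact absurd (show Q ≤ P from Submodule.topologicalClosure_minimal _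
        (sSup_le (by rintro _ ⟨n, rfl⟩; exact hle n)) (𝒩.isClosed P hP)) (not_le_of_gt hPQ)
    have hPRn : P ≤ 𝒩.pred (Qn n) :=
      (le_sSup (show P ∈ {P' | P' ∈ 𝒩.carrier ∧ P' < Qn n} from ⟨hP, hPn⟩)).trans
        (Submodule.le_topologicalClosure _)
    obtain ⟨hQS, hgt⟩ := hFS (g n)
    have hgt' : ε < ‖𝒩.atomProj (Qn n) hQS * a * 𝒩.atomProj (Qn n) hQS‖ := hgt
    have hAeq := 𝒩.atomProj_eq (Qn n) hQS
    have hBeq : 𝒩.proj Q hQmem * (1 - 𝒩.proj P hP) =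
        subProj Q hQclosed - subProj P (𝒩.isClosed P hP) := by
      show subProj Q hQclosed * (1 - subProj P (𝒩.isClosed P hP)) = _
      rw [mul_sub, mul_one, subProj_mul_of_le' (𝒩.isClosed P hP) hQclosed (le_of_lt hPQ)]
    have hAB : 𝒩.atomProj (Qn n) hQS * (𝒩.proj Q hQmem * (1 - 𝒩.proj P hP)) =
        𝒩.atomProj (Qn n) hQS := by
      rw [hAeq, hBeq]
      exact sandwich_left _ _ _ _ hPRn (𝒩.pred_le (hQnmem n)) (hQnleQ n)
    have hBA : (𝒩.proj Q hQmem * (1 - 𝒩.proj P hP)) * 𝒩.atomProj (Qn n) hQS =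
        𝒩.atomProj (Qn n) hQS := by
      rw [hAeq, hBeq]
      exact sandwich_right _ _ _ _ hPRn (𝒩.pred_le (hQnmem n)) (hQnleQ n)
    have hkey := key_norm_le (a := a) hAB hBA (𝒩.norm_atomProj_le (Qn n) hQS)
    linarith
  · -- decreasing case
    set Qn : ℕ → Submodule ℂ H := fun n => F (g n) with hQndef
    have hQnmem : ∀ n, Qn n ∈ 𝒩.carrier := fun n => hFmem (g n)
    have hQnlt : ∀ m n, m < n → Qn n < Qn m := fun m n h => by
      have hle : Qn n ≤ Qn m :=
        (𝒩.total (Qn m) (hQnmem m) (Qn n) (hQnmem n)).resolve_left (hg m n h)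
      exact hle.lt_of_ne fun hEq => h.ne' (g.injective (hFinj hEq))
    set Q : Submodule ℂ H := sInf (Set.range Qn) with hQdef
    have hQmem : Q ∈ 𝒩.carrier := 𝒩.sInf_mem (Set.range Qn)
      (by rintro _ ⟨n, rfl⟩; exact hQnmem n) ⟨Qn 0, 0, rfl⟩
    have hQleQn : ∀ n, Q ≤ Qn n := fun n => sInf_le ⟨n, rfl⟩
    have hQltQn : ∀ n, Q < Qn n := fun n =>
      lt_of_le_of_lt (hQleQn (n + 1)) (hQnlt n (n + 1) (by omega))
    have hQne : Q ≠ ⊤ := ((hQltQn 0).trans_le le_top).ne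
    have hsucc : 𝒩.succ Q = Q := by
      refine le_antisymm ?_ (le_sInf fun P hP => hP.2.le)
      exact sInf_le_sInf (by rintro _ ⟨n, rfl⟩; exact ⟨hQnmem n, hQltQn n⟩)
    have h0 := h₂ Q hQmem hQne hsucc
    have hlt : sInf {r : ℝ | ∃ P, ∃ hP : P ∈ 𝒩.carrier, Q < P ∧
        r = ‖((1 - 𝒩.proj Q hQmem) * 𝒩.proj P hP) * a *
            ((1 - 𝒩.proj Q hQmem) * 𝒩.proj P hP)‖} < ε :=
      lt_of_le_of_lt (le_of_eq h0) hε
    have hnone : {r : ℝ | ∃ P, ∃ hP : P ∈ 𝒩.carrier, Q < P ∧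
        r = ‖((1 - 𝒩.proj Q hQmem) * 𝒩.proj P hP) * a *
            ((1 - 𝒩.proj Q hQmem) * 𝒩.proj P hP)‖}.Nonempty :=
      ⟨_, Qn 0, hQnmem 0, hQltQn 0, rfl⟩
    obtain ⟨r, hrmem, hrlt⟩ := exists_lt_of_csInf_lt hnone hlt
    obtain ⟨P, hP, hQP, rfl⟩ := hrmem
    obtain ⟨n, hn⟩ : ∃ n, Qn n ≤ P := by
      by_contra hc
      push_neg at hc
      have hle : ∀ n, P ≤ Qn n := fun n =>
        (𝒩.total (Qn n) (hQnmem n) P hP).resolve_left (hc n)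
      exact absurd (show P ≤ Q from le_sInf (by rintro _ ⟨n, rfl⟩; exact hle n)) (not_le_of_gt hQP)
    have hQR : Q ≤ 𝒩.pred (Qn n) :=
      (hQleQn (n + 1)).trans
        ((le_sSup (show Qn (n + 1) ∈ {P' | P' ∈ 𝒩.carrier ∧ P' < Qn n} from
          ⟨hQnmem (n + 1), hQnlt n (n + 1) (by omega)⟩)).trans
            (Submodule.le_topologicalClosure _))
    obtain ⟨hQS, hgt⟩ := hFS (g n)
    have hgt' : ε < ‖𝒩.atomProj (Qn n) hQS * a * 𝒩.atomProj (Qn n) hQS‖ := hgt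
    have hAeq := 𝒩.atomProj_eq (Qn n) hQS
    have hBeq : (1 - 𝒩.proj Q hQmem) * 𝒩.proj P hP =
        subProj P (𝒩.isClosed P hP) - subProj Q (𝒩.isClosed Q hQmem) := by
      show (1 - subProj Q (𝒩.isClosed Q hQmem)) * subProj P (𝒩.isClosed P hP) = _
      rw [sub_mul, one_mul,
        subProj_mul_of_le (𝒩.isClosed Q hQmem) (𝒩.isClosed P hP) (le_of_lt hQP)]
    have hAB : 𝒩.atomProj (Qn n) hQS * ((1 - 𝒩.proj Q hQmem) * 𝒩.proj P hP) =
        𝒩.atomProj (Qn n) hQS := by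
      rw [hAeq, hBeq]
      exact sandwich_left _ _ _ _ hQR (𝒩.pred_le (hQnmem n)) hn
    have hBA : ((1 - 𝒩.proj Q hQmem) * 𝒩.proj P hP) * 𝒩.atomProj (Qn n) hQS =
        𝒩.atomProj (Qn n) hQS := by
      rw [hAeq, hBeq]
      exact sandwich_right _ _ _ _ hQR (𝒩.pred_le (hQnmem n)) hn
    have hkey := key_norm_le (a := a) hAB hBA (𝒩.norm_atomProj_le (Qn n) hQS)
    linarith
end

section
/- Let 𝒩 be a nest on a complex Hilbert space H, let Q ∈ 𝒩 with Q_- < Q, and set E = Q Q_-^⊥ (the atom projection). Then for every x ∈ B(H) with x = E x E (any such x lies in Alg 𝒩): inf{‖x + K‖ : K a compact operator with K = E K E} = inf{‖x + k + r‖ : k ∈ K(𝒩), r ∈ Rad(Alg 𝒩)}. (In other words, the natural map B(E H)/K(E H) → B(E H)/(closure of K(𝒩)+Rad(Alg 𝒩)) is isometric.) -/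
open scoped InnerProductSpace

set_option synthInstance.maxHeartbeats 1000000
set_option maxHeartbeats 1000000

variable {H : Type*} [NormedAddCommGroup H] [InnerProductSpace ℂ H] [CompleteSpace H]

section Aux

variable (𝒩 : Nest H) (Q : Submodule ℂ H) (hQ : Q ∈ 𝒩.carrier)

lemma subProj_mem (N : Submodule ℂ H) (hN : IsClosed (N : Set H)) (h : H) :
    subProj N hN h ∈ N := by
  haveI : CompleteSpace N := hN.completeSpace_coe
  exact (N.orthogonalProjection h).2

lemma subProj_eq_self (N : Submodule ℂ H) (hN : IsClosed (N : Set H)) {h : H} (hh : h ∈ N) :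
    subProj N hN h = h := by
  haveI : CompleteSpace N := hN.completeSpace_coe
  have := Submodule.orthogonalProjection_mem_subspace_eq_self (K := N) ⟨h, hh⟩
  simpa [subProj] using congrArg (Subtype.val) this

lemma subProj_selfAdjoint (N : Submodule ℂ H) (hN : IsClosed (N : Set H)) :
    IsSelfAdjoint (subProj N hN) := by
  haveI : CompleteSpace N := hN.completeSpace_coe
  exact isSelfAdjoint_starProjection N

lemma predProj_mem (h : H) : 𝒩.predProj Q h ∈ 𝒩.pred Q := subProj_mem _ _ _

lemma proj_mem (h : H) : 𝒩.proj Q hQ h ∈ Q := subProj_mem _ _ _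

lemma proj_eq_self {h : H} (hh : h ∈ Q) : 𝒩.proj Q hQ h = h := subProj_eq_self _ _ hh

lemma predProj_eq_self {h : H} (hh : h ∈ 𝒩.pred Q) : 𝒩.predProj Q h = h :=
  subProj_eq_self _ _ hh

lemma proj_selfAdjoint : IsSelfAdjoint (𝒩.proj Q hQ) := subProj_selfAdjoint _ _

lemma predProj_selfAdjoint : IsSelfAdjoint (𝒩.predProj Q) := subProj_selfAdjoint _ _

variable (hatom : 𝒩.pred Q < Q)

include hatom

lemma pred_le : 𝒩.pred Q ≤ Q := le_of_lt hatom

lemma atomProj_apply (h : H) :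
    𝒩.atomProj Q hQ h = 𝒩.proj Q hQ h - 𝒩.predProj Q h := by
  have : 𝒩.proj Q hQ (𝒩.predProj Q h) = 𝒩.predProj Q h :=
    proj_eq_self 𝒩 Q hQ (pred_le 𝒩 Q hatom (predProj_mem 𝒩 Q h))
  simp only [Nest.atomProj, ContinuousLinearMap.mul_apply, ContinuousLinearMap.sub_apply,
    ContinuousLinearMap.one_apply, map_sub]
  rw [this]

lemma atomProj_mem (h : H) : 𝒩.atomProj Q hQ h ∈ Q := by
  rw [atomProj_apply 𝒩 Q hQ hatom]
  exact Q.sub_mem (proj_mem 𝒩 Q hQ h) (pred_le 𝒩 Q hatom (predProj_mem 𝒩 Q h))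

lemma atomProj_selfAdjoint : IsSelfAdjoint (𝒩.atomProj Q hQ) := by
  have : 𝒩.atomProj Q hQ = 𝒩.proj Q hQ - 𝒩.predProj Q := by
    ext h; rw [atomProj_apply 𝒩 Q hQ hatom]; rfl
  rw [this]
  exact (subProj_selfAdjoint _ _).sub (subProj_selfAdjoint _ _)

lemma atomProj_pred_zero {h : H} (hh : h ∈ 𝒩.pred Q) : 𝒩.atomProj Q hQ h = 0 := by
  rw [atomProj_apply 𝒩 Q hQ hatom, proj_eq_self 𝒩 Q hQ (pred_le 𝒩 Q hatom hh),
    predProj_eq_self 𝒩 Q hh, sub_self]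

lemma predProj_proj (h : H) : 𝒩.predProj Q (𝒩.proj Q hQ h) = 𝒩.predProj Q h := by
  have h1 : 𝒩.proj Q hQ ∘L 𝒩.predProj Q = 𝒩.predProj Q := by
    ext g
    exact proj_eq_self 𝒩 Q hQ (pred_le 𝒩 Q hatom (predProj_mem 𝒩 Q g))
  have h2 : 𝒩.predProj Q ∘L 𝒩.proj Q hQ = 𝒩.predProj Q := by
    have := congrArg ContinuousLinearMap.adjoint h1
    rwa [ContinuousLinearMap.adjoint_comp, (proj_selfAdjoint 𝒩 Q hQ).adjoint_eq,
      (predProj_selfAdjoint 𝒩 Q).adjoint_eq] at this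
  exact DFunLike.congr_fun h2 h

lemma atomProj_idem_apply (h : H) : 𝒩.atomProj Q hQ (𝒩.atomProj Q hQ h) = 𝒩.atomProj Q hQ h := by
  rw [atomProj_apply 𝒩 Q hQ hatom (𝒩.atomProj Q hQ h),
    proj_eq_self 𝒩 Q hQ (atomProj_mem 𝒩 Q hQ hatom h)]
  have : 𝒩.predProj Q (𝒩.atomProj Q hQ h) = 0 := by
    rw [atomProj_apply 𝒩 Q hQ hatom, map_sub, predProj_proj 𝒩 Q hQ hatom,
      predProj_eq_self 𝒩 Q (predProj_mem 𝒩 Q h), sub_self]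
  rw [this, sub_zero]

lemma atomProj_idem : 𝒩.atomProj Q hQ * 𝒩.atomProj Q hQ = 𝒩.atomProj Q hQ := by
  ext h; exact atomProj_idem_apply 𝒩 Q hQ hatom h

lemma atomProj_norm_apply_le (h : H) : ‖𝒩.atomProj Q hQ h‖ ≤ ‖h‖ := by
  have key : (⟪𝒩.atomProj Q hQ h, 𝒩.atomProj Q hQ h⟫_ℂ : ℂ) = ⟪h, 𝒩.atomProj Q hQ h⟫_ℂ := by
    calc (⟪𝒩.atomProj Q hQ h, 𝒩.atomProj Q hQ h⟫_ℂ : ℂ)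
        = ⟪(ContinuousLinearMap.adjoint (𝒩.atomProj Q hQ)) h, 𝒩.atomProj Q hQ h⟫_ℂ := by
          rw [(atomProj_selfAdjoint 𝒩 Q hQ hatom).adjoint_eq]
      _ = ⟪h, 𝒩.atomProj Q hQ (𝒩.atomProj Q hQ h)⟫_ℂ :=
          ContinuousLinearMap.adjoint_inner_left (𝒩.atomProj Q hQ) (𝒩.atomProj Q hQ h) h
      _ = ⟪h, 𝒩.atomProj Q hQ h⟫_ℂ := by rw [atomProj_idem_apply 𝒩 Q hQ hatom]
  set E := 𝒩.atomProj Q hQ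
  have h1 : ‖E h‖ ^ 2 = RCLike.re (⟪h, E h⟫_ℂ) := by
    rw [← key, inner_self_eq_norm_sq]
  have h2 : RCLike.re (⟪h, E h⟫_ℂ) ≤ ‖h‖ * ‖E h‖ :=
    le_trans (RCLike.re_le_norm _) (norm_inner_le_norm h (E h))
  rcases eq_or_lt_of_le (norm_nonneg (E h)) with hz | hz
  · rw [← hz]; exact norm_nonneg h
  · have : ‖E h‖ * ‖E h‖ ≤ ‖h‖ * ‖E h‖ := by rw [← sq]; linarith
    exact le_of_mul_le_mul_right this hz

lemma compress_norm_le (y : H →L[ℂ] H) :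
    ‖𝒩.atomProj Q hQ * y * 𝒩.atomProj Q hQ‖ ≤ ‖y‖ := by
  apply ContinuousLinearMap.opNorm_le_bound _ (norm_nonneg y)
  intro h
  calc ‖(𝒩.atomProj Q hQ * y * 𝒩.atomProj Q hQ) h‖
      = ‖𝒩.atomProj Q hQ (y (𝒩.atomProj Q hQ h))‖ := rfl
    _ ≤ ‖y (𝒩.atomProj Q hQ h)‖ := atomProj_norm_apply_le 𝒩 Q hQ hatom _
    _ ≤ ‖y‖ * ‖𝒩.atomProj Q hQ h‖ := y.le_opNorm _
    _ ≤ ‖y‖ * ‖h‖ := by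
        exact mul_le_mul_of_nonneg_left (atomProj_norm_apply_le 𝒩 Q hQ hatom h) (norm_nonneg y)

lemma pred_mem_carrier : 𝒩.pred Q ∈ 𝒩.carrier := by
  apply 𝒩.closedSpan_mem _ (fun P hP => hP.1)
  refine ⟨⊥, 𝒩.bot_mem, ?_⟩
  rcases eq_or_ne Q ⊥ with h | h
  · exact absurd (h ▸ hatom) (by simp [not_lt_bot])
  · exact bot_lt_iff_ne_bot.mpr h

lemma compress_mem_nestAlgebra (T : H →L[ℂ] H) :
    𝒩.atomProj Q hQ * T * 𝒩.atomProj Q hQ ∈ nestAlgebra 𝒩 := by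
  intro N hN h hh
  rcases 𝒩.total N hN Q hQ with hNQ | hQN
  · rcases eq_or_lt_of_le hNQ with heq | hlt
    · rw [heq]; exact atomProj_mem 𝒩 Q hQ hatom _
    · have hNe : h ∈ 𝒩.pred Q := by
        have : N ≤ 𝒩.pred Q :=
          le_trans (le_sSup (show N ∈ {P | P ∈ 𝒩.carrier ∧ P < Q} from ⟨hN, hlt⟩))
            (Submodule.le_topologicalClosure _)
        exact this hh
      show 𝒩.atomProj Q hQ (T (𝒩.atomProj Q hQ h)) ∈ N
      rw [atomProj_pred_zero 𝒩 Q hQ hatom hNe, map_zero, map_zero]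
      exact N.zero_mem
  · exact hQN (atomProj_mem 𝒩 Q hQ hatom _)

lemma compress_mul (a b : H →L[ℂ] H) (ha : a ∈ nestAlgebra 𝒩) (hb : b ∈ nestAlgebra 𝒩) :
    𝒩.atomProj Q hQ * (a * b) * 𝒩.atomProj Q hQ =
      (𝒩.atomProj Q hQ * a * 𝒩.atomProj Q hQ) * (𝒩.atomProj Q hQ * b * 𝒩.atomProj Q hQ) := by
  ext h
  show 𝒩.atomProj Q hQ (a (b (𝒩.atomProj Q hQ h)))
      = 𝒩.atomProj Q hQ (a (𝒩.atomProj Q hQ (𝒩.atomProj Q hQ (b (𝒩.atomProj Q hQ h)))))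
  rw [atomProj_idem_apply 𝒩 Q hQ hatom]
  set u := b (𝒩.atomProj Q hQ h) with hu
  have hub : u ∈ Q := hb Q hQ _ (atomProj_mem 𝒩 Q hQ hatom h)
  have hEu : 𝒩.atomProj Q hQ u = u - 𝒩.predProj Q u := by
    rw [atomProj_apply 𝒩 Q hQ hatom, proj_eq_self 𝒩 Q hQ hub]
  have hap : a (𝒩.predProj Q u) ∈ 𝒩.pred Q :=
    ha (𝒩.pred Q) (pred_mem_carrier 𝒩 Q hatom) _ (predProj_mem 𝒩 Q u)
  rw [hEu, map_sub, map_sub, atomProj_pred_zero 𝒩 Q hQ hatom hap, sub_zero]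

lemma radical_compress_zero (w : H →L[ℂ] H) (hw : w ∈ nestRadical 𝒩) :
    𝒩.atomProj Q hQ * w * 𝒩.atomProj Q hQ = 0 := by
  set E := 𝒩.atomProj Q hQ with hE
  have hidem : ∀ g, E (E g) = E g := fun g => atomProj_idem_apply 𝒩 Q hQ hatom g
  have hadj : ∀ g g', (⟪E g, g'⟫_ℂ : ℂ) = ⟪g, E g'⟫_ℂ := fun g g' =>
    (atomProj_selfAdjoint 𝒩 Q hQ hatom).isSymmetric g g'
  have hcm : ∀ s t : H →L[ℂ] H, s ∈ nestAlgebra 𝒩 → t ∈ nestAlgebra 𝒩 →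
      E * (s * t) * E = (E * s * E) * (E * t * E) := fun s t hs ht =>
    compress_mul 𝒩 Q hQ hatom s t hs ht
  have hEmem : ∀ T : H →L[ℂ] H, E * T * E ∈ nestAlgebra 𝒩 := fun T =>
    compress_mem_nestAlgebra 𝒩 Q hQ hatom T
  have hEE : E * E = E := atomProj_idem 𝒩 Q hQ hatom
  obtain ⟨a, ha, rfl⟩ := hw
  by_contra hne
  obtain ⟨u₀, hu₀⟩ : ∃ u₀, (E * (a : H →L[ℂ] H) * E) u₀ ≠ 0 := by
    by_contra hc
    push_neg at hc
    exact hne (ContinuousLinearMap.ext hc)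
  set u := E u₀ with hu
  set v := (E * (a : H →L[ℂ] H) * E) u₀ with hv
  have hvu : v = (E * (a : H →L[ℂ] H) * E) u := by
    show E ((a : H →L[ℂ] H) (E u₀)) = E ((a : H →L[ℂ] H) (E (E u₀)))
    rw [hidem]
  have hvne : v ≠ 0 := hu₀
  have hEv : E v = v := hidem _
  have hEu : E u = u := hidem _
  set c : ℂ := (⟪v, v⟫_ℂ)⁻¹ with hc
  set b : H →L[ℂ] H := c • rankOne v u with hb
  have hbapply : ∀ h, b h = (c * ⟪v, h⟫_ℂ) • u := by
    intro h
    simp [hb, rankOne, ContinuousLinearMap.toSpanSingleton_apply, smul_smul]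
  have hbv : b v = u := by
    rw [hbapply v, hc, inv_mul_cancel₀ (inner_self_ne_zero.mpr hvne), one_smul]
  have hbcomp : b = E * b * E := by
    ext h
    show b h = E (b (E h))
    rw [hbapply (E h), hbapply h, map_smul, hEu]
    have hinner : (⟪v, E h⟫_ℂ : ℂ) = ⟪v, h⟫_ℂ := by
      rw [← hadj v h, hEv]
    rw [hinner]
  have hbmem : b ∈ nestAlgebra 𝒩 := by
    rw [hbcomp]; exact hEmem b
  set b' : nestAlgebra 𝒩 := ⟨b, hbmem⟩ with hb'
  obtain ⟨z, hz⟩ := TwoSidedIdeal.mem_jacobson_iff.mp ha (-b')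
  have hz0 : z * (1 - b' * a) = 1 := by
    have h0 : z * -b' * a + z - 1 = 0 := by simpa using hz
    have h2 : z * -b' * a + z = 1 := by
      have := sub_eq_zero.mp h0
      exact this
    calc z * (1 - b' * a) = z * -b' * a + z := by noncomm_ring
    _ = 1 := h2
  -- coerce to operators
  have hzop : (z : H →L[ℂ] H) * (1 - b * (a : H →L[ℂ] H)) = 1 := by
    have := congrArg (fun t : nestAlgebra 𝒩 => (t : H →L[ℂ] H)) hz0
    simpa [hb'] using this
  have hmemt : (1 : H →L[ℂ] H) - b * (a : H →L[ℂ] H) ∈ nestAlgebra 𝒩 :=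
    Subalgebra.sub_mem _ (Subalgebra.one_mem _) (Subalgebra.mul_mem _ hbmem a.2)
  have hkey : E = (E * (z : H →L[ℂ] H) * E) * (E * (1 - b * (a : H →L[ℂ] H)) * E) := by
    have h3 := hcm (z : H →L[ℂ] H) (1 - b * (a : H →L[ℂ] H)) z.2 hmemt
    rw [hzop] at h3
    rw [← h3, mul_one, hEE]
  have htu : (E * (1 - b * (a : H →L[ℂ] H)) * E) u = 0 := by
    have expand : E * (1 - b * (a : H →L[ℂ] H)) * E
        = E * E - b * (E * (a : H →L[ℂ] H) * E) := by
      have hmul : E * (b * (a : H →L[ℂ] H)) * E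
          = (E * b * E) * (E * (a : H →L[ℂ] H) * E) := hcm b _ hbmem a.2
      rw [mul_sub, sub_mul, mul_one, hmul, ← hbcomp]
    rw [expand]
    have h4 : (E * E) u = u := by rw [hEE]; exact hEu
    show (E * E) u - b ((E * (a : H →L[ℂ] H) * E) u) = 0
    rw [h4, ← hvu, hbv, sub_self]
  have hu0 : u = 0 := by
    have h5 := congrFun (congrArg (fun T : H →L[ℂ] H => (T : H → H)) hkey) u
    rw [hEu] at h5
    rw [h5]
    show (E * (z : H →L[ℂ] H) * E) ((E * (1 - b * (a : H →L[ℂ] H)) * E) u) = 0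
    rw [htu, map_zero]
  exact hvne (by rw [hvu, hu0, map_zero])

end Aux

/-- For an atom `E = Q Q₋^⊥` of the nest and `x = E x E`, the distance from `x` to the compact
operators supported on the atom equals the distance from `x` to `K(𝒩) + Rad(Alg 𝒩)`: the natural
map `B(EH)/K(EH) → B(EH)/(K(𝒩) + Rad(Alg 𝒩))⁻` is isometric. -/
theorem nest_atom_quotient_isometric (𝒩 : Nest H) (Q : Submodule ℂ H) (hQ : Q ∈ 𝒩.carrier)
    (hatom : 𝒩.pred Q < Q) (x : H →L[ℂ] H)
    (hx : x = 𝒩.atomProj Q hQ * x * 𝒩.atomProj Q hQ) :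
    sInf {r : ℝ | ∃ K : H →L[ℂ] H, IsCompactOperator K ∧
        K = 𝒩.atomProj Q hQ * K * 𝒩.atomProj Q hQ ∧ r = ‖x + K‖} =
      sInf {r : ℝ | ∃ k ∈ nestCompacts 𝒩, ∃ w ∈ nestRadical 𝒩, r = ‖x + k + w‖} := by
  set E := 𝒩.atomProj Q hQ with hE
  set S₁ := {r : ℝ | ∃ K : H →L[ℂ] H, IsCompactOperator K ∧ K = E * K * E ∧ r = ‖x + K‖}
  set S₂ := {r : ℝ | ∃ k ∈ nestCompacts 𝒩, ∃ w ∈ nestRadical 𝒩, r = ‖x + k + w‖}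
  have hrad0 : (0 : H →L[ℂ] H) ∈ nestRadical 𝒩 :=
    ⟨0, show (0 : nestAlgebra 𝒩) ∈ (⊥ : TwoSidedIdeal (nestAlgebra 𝒩)).jacobson from
      TwoSidedIdeal.zero_mem _, rfl⟩
  have hne₁ : S₁.Nonempty :=
    ⟨‖x + 0‖, 0, isCompactOperator_zero, by simp, rfl⟩
  have hne₂ : S₂.Nonempty :=
    ⟨‖x + 0 + 0‖, 0, ⟨Subalgebra.zero_mem _, isCompactOperator_zero⟩, 0, hrad0, rfl⟩
  have hbdd₁ : BddBelow S₁ := ⟨0, fun r hr => by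
    obtain ⟨K, _, _, rfl⟩ := hr; exact norm_nonneg _⟩
  have hbdd₂ : BddBelow S₂ := ⟨0, fun r hr => by
    obtain ⟨k, _, w, _, rfl⟩ := hr; exact norm_nonneg _⟩
  apply le_antisymm
  · -- sInf S₁ ≤ sInf S₂
    apply le_csInf hne₂
    rintro r ⟨k, hk, w, hw, rfl⟩
    have hcomp : IsCompactOperator (⇑(E * k * E)) := by
      have h1 : IsCompactOperator (⇑k ∘ ⇑E) := hk.2.comp_clm E
      have h2 : IsCompactOperator (⇑E ∘ (⇑k ∘ ⇑E)) := h1.clm_comp E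
      have : ⇑(E * k * E) = ⇑E ∘ (⇑k ∘ ⇑E) := by
        ext h; rfl
      rwa [this]
    have hEE : E * E = E := atomProj_idem 𝒩 Q hQ hatom
    have hmem : ‖x + E * k * E‖ ∈ S₁ := by
      refine ⟨E * k * E, hcomp, ?_, rfl⟩
      rw [show E * (E * k * E) * E = (E * E) * k * (E * E) by noncomm_ring, hEE]
    have hx' : x = E * x * E := hx
    have hrw : E * w * E = 0 := radical_compress_zero 𝒩 Q hQ hatom w hw
    have heq : x + E * k * E = E * (x + k + w) * E := by
      rw [mul_add, mul_add, add_mul, add_mul, ← hx', hrw, add_zero]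
    have hle : ‖x + E * k * E‖ ≤ ‖x + k + w‖ := by
      rw [heq]; exact compress_norm_le 𝒩 Q hQ hatom _
    exact le_trans (csInf_le hbdd₁ hmem) hle
  · -- sInf S₂ ≤ sInf S₁
    apply csInf_le_csInf hbdd₂ hne₁
    rintro r ⟨K, hc, hK, rfl⟩
    refine ⟨K, ⟨?_, hc⟩, 0, hrad0, by rw [add_zero]⟩
    rw [hK]
    exact compress_mem_nestAlgebra 𝒩 Q hQ hatom K
end
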